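/- The squashing function is self-dual in the sense S^{(β)}_{a,λ}(x) + S^{(β)}_{a,λ}(2a - x) = 1 for all real x, with λ > 0 and β > 0. -/
import Mathlib


noncomputable def squash (β a lam x : ℝ) : ℝ :=
  (1 / (lam * β)) * Real.log ((1 + Real.exp (β * (x - (a - lam / 2)))) /
    (1 + Real.exp (β * (x - (a + lam / 2)))))

lemma squash_key (u v : ℝ) :
    Real.log ((1 + Real.exp u) / (1 + Real.exp v)) +
      Real.log ((1 + Real.exp (-v)) / (1 + Real.exp (-u))) = u - v := by
  have h1 : (0:ℝ) < 1 + Real.exp u := by positivity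
  have h2 : (0:ℝ) < 1 + Real.exp v := by positivity
  have h3 : (0:ℝ) < 1 + Real.exp (-v) := by positivity
  have h4 : (0:ℝ) < 1 + Real.exp (-u) := by positivity
  rw [← Real.log_mul (by positivity) (by positivity)]
  have key : (1 + Real.exp u) / (1 + Real.exp v) *
      ((1 + Real.exp (-v)) / (1 + Real.exp (-u))) = Real.exp (u - v) := by
    rw [Real.exp_sub, Real.exp_neg, Real.exp_neg]
    have hu := Real.exp_pos u
    have hv := Real.exp_pos v
    field_simp
    ring
  rw [key, Real.log_exp]

theorem squash_self_dual (a lam β x : ℝ) (hlam : 0 < lam) (hβ : 0 < β) :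
    squash β a lam x + squash β a lam (2 * a - x) = 1 := by
  unfold squash
  have e1 : β * (2 * a - x - (a - lam / 2)) = -(β * (x - (a + lam / 2))) := by ring
  have e2 : β * (2 * a - x - (a + lam / 2)) = -(β * (x - (a - lam / 2))) := by ring
  rw [e1, e2, ← mul_add, squash_key]
  have : β * (x - (a - lam / 2)) - β * (x - (a + lam / 2)) = lam * β := by ring
  rw [this]
  field_simp
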